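/- Define m(δ) := log(1+δ) − δ/(1+δ) for δ > −1. Then: (1) m is increasing on [0,∞) and decreasing on (−1,0]; (2) for all δ ≥ δ_0 > 0, m(δ) ≥ (1 − δ_0/((1+δ_0)log(1+δ_0))) · log(1+δ); (3) for |δ| ≤ 1/2, m(δ) ≥ (2/7)δ². -/

import Mathlib

open Set

/-- Derivative of m(δ) = log(1+δ) - δ/(1+δ). -/
lemma hasDerivAt_m (x : ℝ) (hx : -1 < x) :
    HasDerivAt (fun δ : ℝ => Real.log (1 + δ) - δ / (1 + δ)) (x / (1 + x) ^ 2) x := by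
  have hne : (1 : ℝ) + x ≠ 0 := by linarith
  have h1 : HasDerivAt (fun δ : ℝ => 1 + δ) 1 x := by
    simpa using (hasDerivAt_id x).const_add 1
  have h2 : HasDerivAt (fun δ : ℝ => Real.log (1 + δ)) (1 / (1 + x)) x := by
    simpa using h1.log hne
  have h3 : HasDerivAt (fun δ : ℝ => δ / (1 + δ))
      ((1 * (1 + x) - x * 1) / (1 + x) ^ 2) x := (hasDerivAt_id x).div h1 hne
  have := h2.sub h3
  refine this.congr_deriv ?_
  field_simp
  ring

lemma mono_m : MonotoneOn (fun δ : ℝ => Real.log (1 + δ) - δ / (1 + δ)) (Set.Ici (0 : ℝ)) := by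
  apply monotoneOn_of_deriv_nonneg (convex_Ici 0)
  · intro x hx
    exact (hasDerivAt_m x (by simp at hx; linarith)).continuousAt.continuousWithinAt
  · intro x hx
    rw [interior_Ici] at hx
    exact (hasDerivAt_m x (by simp at hx; linarith)).differentiableAt.differentiableWithinAt
  · intro x hx
    rw [interior_Ici] at hx
    simp only [mem_Ioi] at hx
    rw [(hasDerivAt_m x (by linarith)).deriv]
    positivity

lemma anti_m : AntitoneOn (fun δ : ℝ => Real.log (1 + δ) - δ / (1 + δ)) (Set.Ioc (-1 : ℝ) 0) := by
  apply antitoneOn_of_deriv_nonpos (convex_Ioc (-1) 0)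
  · intro x hx
    exact (hasDerivAt_m x hx.1).continuousAt.continuousWithinAt
  · intro x hx
    rw [interior_Ioc] at hx
    exact (hasDerivAt_m x hx.1).differentiableAt.differentiableWithinAt
  · intro x hx
    rw [interior_Ioc] at hx
    obtain ⟨hx1, hx2⟩ := hx
    rw [(hasDerivAt_m x hx1).deriv]
    apply div_nonpos_of_nonpos_of_nonneg (by linarith)
    positivity

/-- Padé-type lower bound: for x ≥ 0, 3x(2+x)/(6+6x+x²) ≤ log(1+x). -/
lemma pade_log (x : ℝ) (hx : 0 ≤ x) :
    3 * x * (2 + x) / (6 + 6 * x + x ^ 2) ≤ Real.log (1 + x) := by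
  set F : ℝ → ℝ := fun y => Real.log (1 + y) - 3 * y * (2 + y) / (6 + 6 * y + y ^ 2) with hF
  have hden : ∀ y : ℝ, 0 ≤ y → (0:ℝ) < 6 + 6 * y + y ^ 2 := by intro y hy; nlinarith
  have hD : ∀ y : ℝ, 0 ≤ y →
      HasDerivAt F (y ^ 4 / ((1 + y) * (6 + 6 * y + y ^ 2) ^ 2)) y := by
    intro y hy
    have hne : (1 : ℝ) + y ≠ 0 := by linarith
    have hdne : (6 + 6 * y + y ^ 2 : ℝ) ≠ 0 := ne_of_gt (hden y hy)
    have h1 : HasDerivAt (fun δ : ℝ => 1 + δ) 1 y := by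
      simpa using (hasDerivAt_id y).const_add 1
    have h2 : HasDerivAt (fun δ : ℝ => Real.log (1 + δ)) (1 / (1 + y)) y := by
      simpa using h1.log hne
    have hnum : HasDerivAt (fun δ : ℝ => 3 * δ * (2 + δ)) (6 + 6 * y) y := by
      have : HasDerivAt (fun δ : ℝ => 3 * δ * (2 + δ)) (3 * (2 + y) + 3 * y * 1) y := by
        have ha : HasDerivAt (fun δ : ℝ => 3 * δ) 3 y := by
          simpa using (hasDerivAt_id y).const_mul 3
        have hb : HasDerivAt (fun δ : ℝ => 2 + δ) 1 y := by
          simpa using (hasDerivAt_id y).const_add 2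
        exact ha.mul hb
      convert this using 1; ring
    have hden' : HasDerivAt (fun δ : ℝ => 6 + 6 * δ + δ ^ 2) (6 + 2 * y) y := by
      have ha : HasDerivAt (fun δ : ℝ => 6 + 6 * δ) 6 y := by
        simpa using ((hasDerivAt_id y).const_mul 6).const_add 6
      have hb : HasDerivAt (fun δ : ℝ => δ ^ 2) (2 * y) y := by
        simpa using hasDerivAt_pow 2 y
      exact ha.add hb
    have h3 := hnum.div hden' hdne
    have h4 := h2.sub h3
    refine h4.congr_deriv ?_
    field_simp
    ring
  have hmono : MonotoneOn F (Set.Ici (0 : ℝ)) := by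
    apply monotoneOn_of_deriv_nonneg (convex_Ici 0)
    · intro y hy
      exact (hD y hy).continuousAt.continuousWithinAt
    · intro y hy
      rw [interior_Ici] at hy
      exact (hD y (le_of_lt hy)).differentiableAt.differentiableWithinAt
    · intro y hy
      rw [interior_Ici] at hy
      simp only [mem_Ioi] at hy
      rw [(hD y hy.le).deriv]
      positivity
  have h0 : F 0 = 0 := by simp [hF]
  have := hmono (by simp : (0:ℝ) ∈ Set.Ici (0:ℝ)) (by simpa using hx) hx
  rw [h0] at this
  simp only [hF] at this
  linarith

/-- Monotonicity of g(δ) = c·log(1+δ) - δ/(1+δ) on [δ₀, ∞) when c(1+δ₀) > 1. -/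
lemma mono_g (c δ₀ : ℝ) (hδ₀ : 0 < δ₀) (hc : 1 < c * (1 + δ₀)) :
    MonotoneOn (fun δ : ℝ => c * Real.log (1 + δ) - δ / (1 + δ)) (Set.Ici δ₀) := by
  have hcpos : 0 < c := by nlinarith
  have hD : ∀ y : ℝ, δ₀ ≤ y →
      HasDerivAt (fun δ : ℝ => c * Real.log (1 + δ) - δ / (1 + δ))
        ((c * (1 + y) - 1) / (1 + y) ^ 2) y := by
    intro y hy
    have hne : (1 : ℝ) + y ≠ 0 := by linarith
    have h1 : HasDerivAt (fun δ : ℝ => 1 + δ) 1 y := by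
      simpa using (hasDerivAt_id y).const_add 1
    have h2 : HasDerivAt (fun δ : ℝ => c * Real.log (1 + δ)) (c * (1 / (1 + y))) y := by
      exact HasDerivAt.const_mul c (by simpa using h1.log hne)
    have h3 : HasDerivAt (fun δ : ℝ => δ / (1 + δ))
        ((1 * (1 + y) - y * 1) / (1 + y) ^ 2) y := (hasDerivAt_id y).div h1 hne
    have h4 := h2.sub h3
    refine h4.congr_deriv ?_
    field_simp
    ring
  apply monotoneOn_of_deriv_nonneg (convex_Ici δ₀)
  · intro y hy
    exact (hD y hy).continuousAt.continuousWithinAt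
  · intro y hy
    rw [interior_Ici] at hy
    exact (hD y hy.le).differentiableAt.differentiableWithinAt
  · intro y hy
    rw [interior_Ici] at hy
    simp only [mem_Ioi] at hy
    rw [(hD y hy.le).deriv]
    apply div_nonneg _ (by positivity)
    nlinarith

/-- Quadratic comparison function antitone on [-1/2, 0]. -/
lemma anti_h : AntitoneOn
    (fun δ : ℝ => Real.log (1 + δ) - δ / (1 + δ) - (2 / 7) * δ ^ 2)
    (Set.Icc (-(1:ℝ)/2) 0) := by
  have hD : ∀ y : ℝ, -1 < y →
      HasDerivAt (fun δ : ℝ => Real.log (1 + δ) - δ / (1 + δ) - (2 / 7) * δ ^ 2)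
        (y / (1 + y) ^ 2 - (4 / 7) * y) y := by
    intro y hy
    have h1 := hasDerivAt_m y hy
    have h2 : HasDerivAt (fun δ : ℝ => (2 / 7 : ℝ) * δ ^ 2) ((2/7) * (2 * y)) y :=
      HasDerivAt.const_mul _ (by simpa using hasDerivAt_pow 2 y)
    have := h1.sub h2
    refine this.congr_deriv ?_
    ring
  apply antitoneOn_of_deriv_nonpos (convex_Icc _ _)
  · intro y hy
    exact (hD y (by linarith [hy.1])).continuousAt.continuousWithinAt
  · intro y hy
    rw [interior_Icc] at hy
    exact (hD y (by linarith [hy.1])).differentiableAt.differentiableWithinAt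
  · intro y hy
    rw [interior_Icc] at hy
    obtain ⟨hy1, hy2⟩ := hy
    rw [(hD y (by linarith)).deriv]
    have h1 : (0:ℝ) < (1 + y) ^ 2 := by nlinarith
    rw [sub_nonpos, div_le_iff₀ h1]
    have hA : 0 ≤ 1 - (4/7) * (1 + y)^2 := by nlinarith
    nlinarith [mul_nonneg (neg_nonneg.mpr hy2.le) hA]

theorem stmt5 :
    (MonotoneOn (fun δ : ℝ => Real.log (1 + δ) - δ / (1 + δ)) (Set.Ici (0 : ℝ))) ∧
    (AntitoneOn (fun δ : ℝ => Real.log (1 + δ) - δ / (1 + δ)) (Set.Ioc (-1 : ℝ) 0)) ∧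
    (∀ δ δ₀ : ℝ, 0 < δ₀ → δ₀ ≤ δ →
      (1 - δ₀ / ((1 + δ₀) * Real.log (1 + δ₀))) * Real.log (1 + δ)
        ≤ Real.log (1 + δ) - δ / (1 + δ)) ∧
    (∀ δ : ℝ, |δ| ≤ 1 / 2 → (2 / 7) * δ ^ 2 ≤ Real.log (1 + δ) - δ / (1 + δ)) := by
  refine ⟨mono_m, anti_m, ?_, ?_⟩
  · -- part 3
    intro δ δ₀ h0 hle
    set c : ℝ := δ₀ / ((1 + δ₀) * Real.log (1 + δ₀)) with hc
    have hlogpos : 0 < Real.log (1 + δ₀) := Real.log_pos (by linarith)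
    have hloglt : Real.log (1 + δ₀) < δ₀ := by
      have := Real.log_lt_sub_one_of_pos (show (0:ℝ) < 1 + δ₀ by linarith)
        (by intro h; nlinarith [h.symm ▸ (rfl : (1:ℝ) = 1)])
      linarith [this]
    have hc1 : 1 < c * (1 + δ₀) := by
      rw [hc]
      rw [div_mul_eq_mul_div, lt_div_iff₀ (by positivity)]
      have : (0:ℝ) < 1 + δ₀ := by linarith
      calc 1 * ((1 + δ₀) * Real.log (1 + δ₀)) = (1 + δ₀) * Real.log (1 + δ₀) := by ring
        _ < (1 + δ₀) * δ₀ := by nlinarith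
        _ = δ₀ * (1 + δ₀) := by ring
    have hg := mono_g c δ₀ h0 hc1
    have hg0 : c * Real.log (1 + δ₀) - δ₀ / (1 + δ₀) = 0 := by
      rw [hc]
      field_simp
      ring
    have h5 : c * Real.log (1 + δ₀) - δ₀ / (1 + δ₀) ≤ c * Real.log (1 + δ) - δ / (1 + δ) :=
      hg (Set.mem_Ici.mpr le_rfl) (by simpa using hle) hle
    have hexp : (1 - c) * Real.log (1 + δ) = Real.log (1 + δ) - c * Real.log (1 + δ) := by ring
    rw [hexp]
    linarith
  · -- part 4
    intro δ hδ
    rw [abs_le] at hδ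
    obtain ⟨h1, h2⟩ := hδ
    rcases le_or_gt 0 δ with hpos | hneg
    · -- positive case: use Padé bound
      have hp := pade_log δ hpos
      have hden : (0:ℝ) < 6 + 6 * δ + δ ^ 2 := by nlinarith
      have hone : (0:ℝ) < 1 + δ := by linarith
      have key : (2 / 7) * δ ^ 2 + δ / (1 + δ) ≤ 3 * δ * (2 + δ) / (6 + 6 * δ + δ ^ 2) := by
        have e : (2 / 7) * δ ^ 2 + δ / (1 + δ) = (2 * δ ^ 2 * (1 + δ) + 7 * δ) / (7 * (1 + δ)) := by
          field_simp
        rw [e, div_le_div_iff₀ (by positivity) hden]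
        have inner : 0 ≤ 9 - 10 * δ - 14 * δ ^ 2 - 2 * δ ^ 3 := by
          nlinarith [mul_nonneg hpos hpos, mul_nonneg (mul_nonneg hpos hpos) hpos]
        nlinarith [mul_nonneg (sq_nonneg δ) inner]
      linarith
    · -- negative case: antitone comparison
      have := anti_h (show δ ∈ Set.Icc (-(1:ℝ)/2) 0 by constructor <;> linarith)
        (show (0:ℝ) ∈ Set.Icc (-(1:ℝ)/2) 0 by constructor <;> norm_num) hneg.le
      norm_num at this
      linarith
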